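/- arXiv:1812.11297 — 7 statements merged into one kernel-verified Lean document; each statement's English description precedes it below -/
import Mathlib

section
/- If f(ξ) = -∑_{c,t} |ξ_c^t - ξ̂_c^t| is the negative Manhattan distance from a fixed ideal distribution ξ̂, then f is pseudo M-concave: for every two distinct distributions ξ, ξ' with the same coordinate sum, there exist indices (c,t) and (c',t') with ξ_c^t > ξ'_c^t and ξ_{c'}^{t'} < ξ'_{c'}^{t'} such that min{f(ξ - χ_{c,t} + χ_{c',t'}), f(ξ' + χ_{c,t} - χ_{c',t'})} ≥ min{f(ξ), f(ξ')}. -/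
open Finset

/-- Move one unit from coordinate `i` to coordinate `j`:  ξ - χ_i + χ_j. -/
def move {ι : Type*} [DecidableEq ι] (ξ : ι → ℕ) (i j : ι) : ι → ℕ :=
  fun k => ξ k - (if k = i then 1 else 0) + (if k = j then 1 else 0)

/-- The negative Manhattan distance to an ideal distribution `ξhat`. -/
def manhattanF {ι : Type*} [Fintype ι] (ξhat ξ : ι → ℕ) : ℤ :=
  -∑ p, |(ξ p : ℤ) - (ξhat p : ℤ)|

lemma dd1 (a c : ℕ) : |(a:ℤ) - c| - |((a:ℤ) - 1) - c| = if c < a then 1 else -1 := by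
  rcases abs_cases ((a:ℤ) - c) with ⟨e1,_⟩|⟨e1,_⟩ <;>
  rcases abs_cases (((a:ℤ) - 1) - c) with ⟨e2,_⟩|⟨e2,_⟩ <;> split_ifs <;> omega

lemma dd2 (a c : ℕ) : |(a:ℤ) - c| - |((a:ℤ) + 1) - c| = if a < c then 1 else -1 := by
  rcases abs_cases ((a:ℤ) - c) with ⟨e1,_⟩|⟨e1,_⟩ <;>
  rcases abs_cases (((a:ℤ) + 1) - c) with ⟨e2,_⟩|⟨e2,_⟩ <;> split_ifs <;> omega

lemma move_f {ι : Type*} [Fintype ι] [DecidableEq ι] (ξhat ξ : ι → ℕ) {i j : ι}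
    (hij : i ≠ j) (hi : 1 ≤ ξ i) :
    manhattanF ξhat (move ξ i j) = manhattanF ξhat ξ
      + (if ξhat i < ξ i then 1 else -1) + (if ξ j < ξhat j then 1 else -1) := by
  have hmi : ((move ξ i j i : ℕ) : ℤ) = (ξ i : ℤ) - 1 := by
    have h : move ξ i j i = ξ i - 1 := by simp [move, hij]
    rw [h]; omega
  have hmj : ((move ξ i j j : ℕ) : ℤ) = (ξ j : ℤ) + 1 := by
    have h : move ξ i j j = ξ j + 1 := by simp [move, Ne.symm hij]
    rw [h]; omega
  have hmo : ∀ k, k ≠ i → k ≠ j → ((move ξ i j k : ℕ):ℤ) = (ξ k : ℤ) := by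
    intro k h1 h2; simp [move, h1, h2]
  have hs : ∑ p ∈ ({i, j} : Finset ι),
      (|((move ξ i j p : ℕ):ℤ) - ξhat p| - |(ξ p:ℤ) - ξhat p|)
      = ∑ p, (|((move ξ i j p : ℕ):ℤ) - ξhat p| - |(ξ p:ℤ) - ξhat p|) := by
    refine Finset.sum_subset (Finset.subset_univ _) ?_
    intro x _ hx
    simp only [Finset.mem_insert, Finset.mem_singleton, not_or] at hx
    rw [hmo x hx.1 hx.2]; ring
  rw [Finset.sum_pair hij, hmi, hmj] at hs
  rw [Finset.sum_sub_distrib] at hs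
  have d1 := dd1 (ξ i) (ξhat i)
  have d2 := dd2 (ξ j) (ξhat j)
  unfold manhattanF
  split_ifs at d1 d2 ⊢ <;> linarith

lemma keylem (a b c : ℤ) (h1 : b < a → c ≤ b) (h2 : a < b → b ≤ c) :
    |a - c| - |b - c| = |a - b| := by
  rcases abs_cases (a-c) with ⟨e1,_⟩|⟨e1,_⟩ <;> rcases abs_cases (b-c) with ⟨e2,_⟩|⟨e2,_⟩ <;>
  rcases abs_cases (a-b) with ⟨e3,_⟩|⟨e3,_⟩ <;> omega

lemma hard_ineq {ι : Type*} [Fintype ι] [DecidableEq ι] (ξhat ξ ξ' : ι → ℕ)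
    {i0 j0 : ι} (h0 : ξ' i0 < ξ i0) (h1 : ξ j0 < ξ' j0)
    (H : ∀ p, |(ξ p : ℤ) - ξhat p| - |(ξ' p : ℤ) - ξhat p| = |(ξ p : ℤ) - ξ' p|) :
    manhattanF ξhat ξ + 2 ≤ manhattanF ξhat ξ' := by
  have hij : i0 ≠ j0 := by rintro rfl; omega
  have hsum : ∑ p, (|(ξ p:ℤ) - ξhat p| - |(ξ' p:ℤ) - ξhat p|) = ∑ p, |(ξ p:ℤ) - ξ' p| :=
    Finset.sum_congr rfl (fun p _ => H p)
  rw [Finset.sum_sub_distrib] at hsum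
  have h2 : (2:ℤ) ≤ ∑ p, |(ξ p:ℤ) - (ξ' p:ℤ)| := by
    have e : ∑ p ∈ ({i0,j0} : Finset ι), |(ξ p:ℤ) - ξ' p| ≤ ∑ p, |(ξ p:ℤ) - (ξ' p:ℤ)| :=
      Finset.sum_le_sum_of_subset_of_nonneg (Finset.subset_univ _) (fun _ _ _ => abs_nonneg _)
    rw [Finset.sum_pair hij] at e
    have a1 : (1:ℤ) ≤ |(ξ i0:ℤ) - ξ' i0| := by
      rcases abs_cases ((ξ i0:ℤ) - ξ' i0) with ⟨e1,_⟩|⟨e1,_⟩ <;> omega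
    have a2 : (1:ℤ) ≤ |(ξ j0:ℤ) - ξ' j0| := by
      rcases abs_cases ((ξ j0:ℤ) - ξ' j0) with ⟨e1,_⟩|⟨e1,_⟩ <;> omega
    linarith
  unfold manhattanF; linarith

/-- The negative Manhattan distance from a fixed ideal distribution is
pseudo M-concave. -/
theorem manhattan_pseudo_M_concave {ι : Type*} [Fintype ι] [DecidableEq ι]
    (ξhat : ι → ℕ) (ξ ξ' : ι → ℕ) (hne : ξ ≠ ξ')
    (hsum : ∑ p, ξ p = ∑ p, ξ' p) :
    ∃ i j : ι, ξ' i < ξ i ∧ ξ j < ξ' j ∧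
      min (manhattanF ξhat (move ξ i j)) (manhattanF ξhat (move ξ' j i))
        ≥ min (manhattanF ξhat ξ) (manhattanF ξhat ξ') := by
  -- existence of some i0 ∈ A and j0 ∈ B
  obtain ⟨p0, hp0⟩ : ∃ p, ξ p ≠ ξ' p := by
    by_contra h; push_neg at h; exact hne (funext h)
  have hexA : ∃ i, ξ' i < ξ i := by
    by_contra h; push_neg at h
    rcases lt_or_gt_of_ne hp0 with hlt | hgt
    · -- ξ p0 < ξ' p0, and ∀ i, ξ i ≤ ξ' i: we need ∃ i, ξ' i < ξ i anyway
      have : ∑ p, ξ p < ∑ p, ξ' p :=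
        Finset.sum_lt_sum (fun i _ => h i) ⟨p0, Finset.mem_univ p0, hlt⟩
      omega
    · exact absurd (h p0) (by omega)
  have hexB : ∃ j, ξ j < ξ' j := by
    by_contra h; push_neg at h
    rcases lt_or_gt_of_ne hp0 with hlt | hgt
    · exact absurd (h p0) (by omega)
    · have : ∑ p, ξ' p < ∑ p, ξ p :=
        Finset.sum_lt_sum (fun i _ => h i) ⟨p0, Finset.mem_univ p0, hgt⟩
      omega
  obtain ⟨i0, hi0⟩ := hexA
  obtain ⟨j0, hj0⟩ := hexB
  -- pair equations helper, inlined via move_f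
  have pairs : ∀ i j : ι, ξ' i < ξ i → ξ j < ξ' j →
      manhattanF ξhat (move ξ i j) = manhattanF ξhat ξ
        + (if ξhat i < ξ i then 1 else -1) + (if ξ j < ξhat j then 1 else -1)
      ∧ manhattanF ξhat (move ξ' j i) = manhattanF ξhat ξ'
        + (if ξhat j < ξ' j then 1 else -1) + (if ξ' i < ξhat i then 1 else -1) := by
    intro i j hA hB
    have hij : i ≠ j := by rintro rfl; omega
    exact ⟨move_f ξhat ξ hij (by omega), move_f ξhat ξ' (Ne.symm hij) (by omega)⟩
  by_cases hP : ∃ i, ξ' i < ξ i ∧ ξhat i < ξ i ∧ ξ' i < ξhat i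
  · obtain ⟨i, hA, h1, h2⟩ := hP
    obtain ⟨e1, e2⟩ := pairs i j0 hA hj0
    exact ⟨i, j0, hA, hj0, by rw [e1, e2]; split_ifs <;> omega⟩
  by_cases hQ : ∃ j, ξ j < ξ' j ∧ ξ j < ξhat j ∧ ξhat j < ξ' j
  · obtain ⟨j, hB, h1, h2⟩ := hQ
    obtain ⟨e1, e2⟩ := pairs i0 j hi0 hB
    exact ⟨i0, j, hi0, hB, by rw [e1, e2]; split_ifs <;> omega⟩
  push_neg at hP hQ
  by_cases hT : ∃ i, ξ' i < ξ i ∧ ξhat i < ξ i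
  · by_cases hU : ∃ j, ξ j < ξ' j ∧ ξhat j < ξ' j
    · -- good pair (a+, d+)
      obtain ⟨i, hA, hai⟩ := hT
      obtain ⟨j, hB, hdj⟩ := hU
      have hbi : ξhat i ≤ ξ' i := hP i hA hai
      have hcj : ¬ (ξ j < ξhat j) := fun hc => absurd (hQ j hB hc) (by omega)
      obtain ⟨e1, e2⟩ := pairs i j hA hB
      exact ⟨i, j, hA, hB, by rw [e1, e2]; split_ifs <;> omega⟩
    · push_neg at hU
      -- all j ∈ B have c+ : ξ j < ξhat j
      have hScc : ∀ j, ξ j < ξ' j → ξ j < ξhat j := by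
        intro j hB; have := hU j hB; omega
      by_cases hR : ∃ i, ξ' i < ξ i ∧ ξ' i < ξhat i
      · -- pair (b+, c+)
        obtain ⟨i, hA, hbi⟩ := hR
        have hai : ¬ (ξhat i < ξ i) := fun ha => absurd (hP i hA ha) (by omega)
        have hcj : ξ j0 < ξhat j0 := hScc j0 hj0
        have hdj : ¬ (ξhat j0 < ξ' j0) := by have := hU j0 hj0; omega
        obtain ⟨e1, e2⟩ := pairs i j0 hA hj0
        exact ⟨i, j0, hA, hj0, by rw [e1, e2]; split_ifs <;> omega⟩
      · -- hard case 1 : all A (+,-), all B (+,-) ; F + 2 ≤ F'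
        push_neg at hR
        have hge : manhattanF ξhat ξ + 2 ≤ manhattanF ξhat ξ' := by
          refine hard_ineq ξhat ξ ξ' hi0 hj0 (fun p => ?_)
          rcases lt_trichotomy (ξ' p) (ξ p) with h | h | h
          · exact keylem _ _ _ (fun _ => by have := hR p h; omega)
              (fun hc => absurd hc (by push_cast; omega))
          · rw [h]; simp
          · exact keylem _ _ _ (fun hc => absurd hc (by push_cast; omega))
              (fun _ => by have := hScc p h; have := hU p h; omega)
        have hai : ξhat i0 < ξ i0 := by have := hR i0 hi0; omega
        have hbi : ¬ (ξ' i0 < ξhat i0) := by have := hR i0 hi0; omega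
        have hcj : ξ j0 < ξhat j0 := hScc j0 hj0
        have hdj : ¬ (ξhat j0 < ξ' j0) := by have := hU j0 hj0; omega
        obtain ⟨e1, e2⟩ := pairs i0 j0 hi0 hj0
        exact ⟨i0, j0, hi0, hj0, by rw [e1, e2]; split_ifs <;> omega⟩
  · push_neg at hT
    -- all i ∈ A have b+ : ξ' i < ξhat i
    have hRbb : ∀ i, ξ' i < ξ i → ξ' i < ξhat i := by
      intro i hA; have := hT i hA; omega
    by_cases hS : ∃ j, ξ j < ξ' j ∧ ξ j < ξhat j
    · -- pair (b+, c+)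
      obtain ⟨j, hB, hcj⟩ := hS
      have hbi : ξ' i0 < ξhat i0 := hRbb i0 hi0
      have hai : ¬ (ξhat i0 < ξ i0) := by have := hT i0 hi0; omega
      have hdj : ¬ (ξhat j < ξ' j) := fun hd => absurd (hQ j hB hcj) (by omega)
      obtain ⟨e1, e2⟩ := pairs i0 j hi0 hB
      exact ⟨i0, j, hi0, hB, by rw [e1, e2]; split_ifs <;> omega⟩
    · -- hard case 2 : all A (-,+), all B (-,+) ; F' + 2 ≤ F
      push_neg at hS
      have hge : manhattanF ξhat ξ' + 2 ≤ manhattanF ξhat ξ := by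
        refine hard_ineq ξhat ξ' ξ hj0 hi0 (fun p => ?_)
        rcases lt_trichotomy (ξ p) (ξ' p) with h | h | h
        · exact keylem _ _ _ (fun _ => by have := hS p h; omega)
            (fun hc => absurd hc (by push_cast; omega))
        · rw [h]; simp
        · exact keylem _ _ _ (fun hc => absurd hc (by push_cast; omega))
            (fun _ => by have := hRbb p h; have := hT p h; omega)
      have hai : ¬ (ξhat i0 < ξ i0) := by have := hT i0 hi0; omega
      have hbi : ξ' i0 < ξhat i0 := hRbb i0 hi0
      have hcj : ¬ (ξ j0 < ξhat j0) := by have := hS j0 hj0; omega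
      have hdj : ξhat j0 < ξ' j0 := by have := hS j0 hj0; omega
      obtain ⟨e1, e2⟩ := pairs i0 j0 hi0 hj0
      exact ⟨i0, j0, hi0, hj0, by rw [e1, e2]; split_ifs <;> omega⟩
end

section
/- If Ξ is a set of distributions such that Ξ ∩ Ξ⁰ is M-convex, then there exist a pseudo M-concave function f (on Ξ⁰) and a constant λ ∈ ℝ such that {ξ ∈ Ξ⁰ : f(ξ) ≥ λ} = Ξ ∩ Ξ⁰. In particular, the indicator function f equal to 1 on Ξ ∩ Ξ⁰ and 0 elsewhere is pseudo M-concave, with λ = 1. -/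
open Finset

/-- A set of distributions is M-convex. -/
def MConvex {ι : Type*} [DecidableEq ι] (S : Set (ι → ℕ)) : Prop :=
  ∀ ξ ∈ S, ∀ ξ' ∈ S, ∀ i, ξ' i < ξ i →
    ∃ j, ξ j < ξ' j ∧ move ξ i j ∈ S ∧ move ξ' j i ∈ S

/-- The set Ξ⁰ of distributions with total sum `N` respecting the school
capacities `q`. -/
def Xi0 {C T : Type*} [Fintype C] [Fintype T] (N : ℕ) (q : C → ℕ) :
    Set (C × T → ℕ) :=
  {ξ | (∑ p, ξ p = N) ∧ ∀ c, ∑ t, ξ (c, t) ≤ q c}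

/-- Pseudo M-concavity of a function `f` on the domain `Ξ⁰`. -/
def PseudoMConcave {ι : Type*} [DecidableEq ι] (Xi : Set (ι → ℕ))
    (f : (ι → ℕ) → ℝ) : Prop :=
  ∀ ξ ∈ Xi, ∀ ξ' ∈ Xi, ξ ≠ ξ' →
    ∃ i j, ξ' i < ξ i ∧ ξ j < ξ' j ∧
      min (f (move ξ i j)) (f (move ξ' j i)) ≥ min (f ξ) (f ξ')

/-- If `Ξ ∩ Ξ⁰` is M-convex, then there are a pseudo M-concave function `f`
and a constant `λ` whose upper contour set within `Ξ⁰` is exactly `Ξ ∩ Ξ⁰`;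
in particular the 0/1 indicator of `Ξ ∩ Ξ⁰` works with `λ = 1`. -/
theorem MConvex_iff_pseudoMConcave_representation
    {C T : Type*} [Fintype C] [Fintype T] [DecidableEq C] [DecidableEq T]
    (N : ℕ) (q : C → ℕ) (Ξ : Set (C × T → ℕ))
    (hM : MConvex (Ξ ∩ Xi0 (T := T) N q)) :
    (∃ (f : (C × T → ℕ) → ℝ) (lam : ℝ),
        PseudoMConcave (Xi0 (T := T) N q) f ∧
        {ξ | ξ ∈ Xi0 (T := T) N q ∧ f ξ ≥ lam} = Ξ ∩ Xi0 (T := T) N q) ∧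
    (∀ f : (C × T → ℕ) → ℝ,
        (∀ ξ ∈ Ξ ∩ Xi0 (T := T) N q, f ξ = 1) →
        (∀ ξ ∉ Ξ ∩ Xi0 (T := T) N q, f ξ = 0) →
        PseudoMConcave (Xi0 (T := T) N q) f ∧
        {ξ | ξ ∈ Xi0 (T := T) N q ∧ f ξ ≥ 1} = Ξ ∩ Xi0 (T := T) N q) := by
  classical
  -- helper: distinct elements of Xi0 differ in both directions
  have key : ∀ ξ ∈ Xi0 (T := T) N q, ∀ ξ' ∈ Xi0 (T := T) N q, ξ ≠ ξ' →
      (∃ i, ξ' i < ξ i) ∧ (∃ j, ξ j < ξ' j) := by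
    intro ξ hξ ξ' hξ' hne
    have hsum : ∑ p, ξ p = ∑ p, ξ' p := hξ.1.trans hξ'.1.symm
    constructor
    · by_contra h
      push_neg at h
      have hle : ∑ p, ξ p ≤ ∑ p, ξ' p :=
        Finset.sum_le_sum (fun i _ => h i)
      rcases lt_or_eq_of_le hle with hlt | heq
      · omega
      · exact hne (funext fun i =>
          (Finset.sum_eq_sum_iff_of_le (fun i _ => h i)).1 heq i (Finset.mem_univ i))
    · by_contra h
      push_neg at h
      have hle : ∑ p, ξ' p ≤ ∑ p, ξ p :=
        Finset.sum_le_sum (fun i _ => h i)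
      rcases lt_or_eq_of_le hle with hlt | heq
      · omega
      · exact hne (funext fun i =>
          ((Finset.sum_eq_sum_iff_of_le (fun i _ => h i)).1 heq i
            (Finset.mem_univ i)).symm)
  have main : ∀ f : (C × T → ℕ) → ℝ,
      (∀ ξ ∈ Ξ ∩ Xi0 (T := T) N q, f ξ = 1) →
      (∀ ξ ∉ Ξ ∩ Xi0 (T := T) N q, f ξ = 0) →
      PseudoMConcave (Xi0 (T := T) N q) f ∧
      {ξ | ξ ∈ Xi0 (T := T) N q ∧ f ξ ≥ 1} = Ξ ∩ Xi0 (T := T) N q := by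
    intro f h1 h0
    have hnn : ∀ ξ, 0 ≤ f ξ := by
      intro ξ
      by_cases hξ : ξ ∈ Ξ ∩ Xi0 (T := T) N q
      · rw [h1 ξ hξ]; norm_num
      · rw [h0 ξ hξ]
    constructor
    · intro ξ hξ ξ' hξ' hne
      obtain ⟨⟨i, hi⟩, ⟨j, hj⟩⟩ := key ξ hξ ξ' hξ' hne
      by_cases hmem : ξ ∈ Ξ ∩ Xi0 (T := T) N q ∧ ξ' ∈ Ξ ∩ Xi0 (T := T) N q
      · obtain ⟨j', hj', hm1, hm2⟩ := hM ξ hmem.1 ξ' hmem.2 i hi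
        refine ⟨i, j', hi, hj', ?_⟩
        rw [h1 _ hm1, h1 _ hm2, h1 _ hmem.1, h1 _ hmem.2]
      · refine ⟨i, j, hi, hj, ?_⟩
        have : min (f ξ) (f ξ') = 0 := by
          rcases not_and_or.1 hmem with h | h
          · rw [h0 _ h]; exact min_eq_left (hnn _)
          · rw [h0 _ h]; exact min_eq_right (hnn _)
        rw [this]
        exact le_min (hnn _) (hnn _)
    · ext ξ
      simp only [Set.mem_setOf_eq]
      constructor
      · rintro ⟨hX, hf⟩
        by_contra h
        rw [h0 ξ h] at hf
        linarith
      · intro h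
        exact ⟨h.2, by rw [h1 ξ h]⟩
  refine ⟨?_, main⟩
  refine ⟨fun ξ => if ξ ∈ Ξ ∩ Xi0 (T := T) N q then 1 else 0, 1, ?_⟩
  exact main _ (fun ξ hξ => if_pos hξ) (fun ξ hξ => if_neg hξ)
end

section
/- Let Ξ be a school-level diversity policy: Ξ = {ξ : p_c^t ≤ ξ_c^t ≤ q_c^t for all schools c and types t}, for fixed integer floors p_c^t and ceilings q_c^t. Then Ξ ∩ Ξ⁰ is an M-convex set. -/
open Finset

/-- Sum of a move over any finset. -/
lemma sum_move_eq {ι : Type*} [DecidableEq ι] (ξ : ι → ℕ) (i j : ι)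
    (hξ : 1 ≤ ξ i) (s : Finset ι) :
    ∑ k ∈ s, move ξ i j k =
      (∑ k ∈ s, ξ k - (if i ∈ s then 1 else 0)) + (if j ∈ s then 1 else 0) := by
  have hle : ∀ k ∈ s, (if k = i then 1 else 0) ≤ ξ k := by
    intro k _
    split_ifs with h
    · subst h; exact hξ
    · exact Nat.zero_le _
  simp only [move]
  rw [Finset.sum_add_distrib, Finset.sum_tsub_distrib _ hle,
    Finset.sum_ite_eq' s i (fun _ => 1), Finset.sum_ite_eq' s j (fun _ => 1)]

/-- School-wise sum of a move. -/
lemma school_sum_move {C T : Type*} [Fintype T] [DecidableEq C] [DecidableEq T]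
    (ξ : C × T → ℕ) (c c' : C) (t t' : T) (hξ : 1 ≤ ξ (c, t)) (d : C) :
    ∑ u, move ξ (c, t) (c', t') (d, u) =
      (∑ u, ξ (d, u) - (if d = c then 1 else 0)) + (if d = c' then 1 else 0) := by
  have hinj : Function.Injective (fun u : T => (d, u)) := fun a b h => by
    simpa using h
  have := sum_move_eq ξ (c, t) (c', t') hξ (Finset.univ.image (fun u : T => (d, u)))
  rw [Finset.sum_image (fun a _ b _ h => hinj h),
      Finset.sum_image (fun a _ b _ h => hinj h)] at this
  rw [this]
  have hmi : ((c, t) ∈ Finset.univ.image (fun u : T => (d, u))) ↔ d = c := by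
    simp [eq_comm, Prod.ext_iff]
  have hmj : ((c', t') ∈ Finset.univ.image (fun u : T => (d, u))) ↔ d = c' := by
    simp [eq_comm, Prod.ext_iff]
  rw [if_congr hmi rfl rfl, if_congr hmj rfl rfl]

lemma move_bounds {ι : Type*} [DecidableEq ι] (p q ξ : ι → ℕ) (i j : ι)
    (hb : ∀ k, p k ≤ ξ k ∧ ξ k ≤ q k)
    (hi : p i < ξ i) (hj : ξ j < q j) (hij : i ≠ j) :
    ∀ k, p k ≤ move ξ i j k ∧ move ξ i j k ≤ q k := by
  intro k
  have hk := hb k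
  unfold move
  split_ifs with h1 h2 h2
  · exact absurd (h1.symm.trans h2) hij
  · subst h1; omega
  · subst h2; omega
  · omega

/-- For a school-level diversity policy (type-specific floors `p` and
ceilings `qct` at each school), `Ξ ∩ Ξ⁰` is an M-convex set. -/
theorem schoolLevelDiversity_MConvex
    {C T : Type*} [Fintype C] [Fintype T] [DecidableEq C] [DecidableEq T]
    (N : ℕ) (q : C → ℕ) (p qct : C → T → ℕ) :
    MConvex ({ξ : C × T → ℕ | ∀ c t, p c t ≤ ξ (c, t) ∧ ξ (c, t) ≤ qct c t}
      ∩ Xi0 (T := T) N q) := by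
  rintro ξ ⟨hbox, hsum, hcap⟩ ξ' ⟨hbox', hsum', hcap'⟩ ⟨c, t⟩ hi
  -- basic facts
  have hξ1 : 1 ≤ ξ (c, t) := Nat.one_le_iff_ne_zero.mpr (by omega)
  have hbox2 : ∀ k : C × T, p k.1 k.2 ≤ ξ k ∧ ξ k ≤ qct k.1 k.2 := fun k => hbox k.1 k.2
  have hbox2' : ∀ k : C × T, p k.1 k.2 ≤ ξ' k ∧ ξ' k ≤ qct k.1 k.2 := fun k => hbox' k.1 k.2
  -- helper to build membership
  have mem_of : ∀ (c' : C) (t' : T), ξ (c', t') < ξ' (c', t') →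
      (∀ d, (∑ u, move ξ (c, t) (c', t') (d, u)) ≤ q d) →
      (∀ d, (∑ u, move ξ' (c', t') (c, t) (d, u)) ≤ q d) →
      ∃ j, ξ j < ξ' j ∧
        move ξ (c, t) j ∈ ({ξ : C × T → ℕ | ∀ c t, p c t ≤ ξ (c, t) ∧ ξ (c, t) ≤ qct c t}
          ∩ Xi0 (T := T) N q) ∧
        move ξ' j (c, t) ∈ ({ξ : C × T → ℕ | ∀ c t, p c t ≤ ξ (c, t) ∧ ξ (c, t) ≤ qct c t}
          ∩ Xi0 (T := T) N q) := by
    intro c' t' hlt hc1 hc2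
    have hξ'1 : 1 ≤ ξ' (c', t') := by omega
    have hne : (c, t) ≠ (c', t') := by
      intro h; rw [h] at hi; omega
    have hN : 1 ≤ N := by
      rw [← hsum]
      calc 1 ≤ ξ (c, t) := hξ1
        _ ≤ ∑ p, ξ p := Finset.single_le_sum (fun _ _ => Nat.zero_le _) (Finset.mem_univ _)
    refine ⟨(c', t'), hlt, ⟨?_, ?_, hc1⟩, ⟨?_, ?_, hc2⟩⟩
    · intro d u
      exact move_bounds (fun k => p k.1 k.2) (fun k => qct k.1 k.2) ξ (c, t) (c', t')
        hbox2 (show p c t < ξ (c, t) by have := (hbox c t).1; have := (hbox' c t).1; omega)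
        (show ξ (c', t') < qct c' t' by have := (hbox c' t').2; have := (hbox' c' t').2; omega)
        hne (d, u)
    · rw [sum_move_eq ξ (c, t) (c', t') hξ1 Finset.univ]
      simp [hsum]; omega
    · intro d u
      exact move_bounds (fun k => p k.1 k.2) (fun k => qct k.1 k.2) ξ' (c', t') (c, t)
        hbox2' (show p c' t' < ξ' (c', t') by have := (hbox c' t').1; have := (hbox' c' t').1; omega)
        (show ξ' (c, t) < qct c t by have := (hbox c t).2; have := (hbox' c t).2; omega)
        (Ne.symm hne) (d, u)
    · rw [sum_move_eq ξ' (c', t') (c, t) hξ'1 Finset.univ]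
      simp [hsum']; omega
  by_cases h : ∃ t', ξ (c, t') < ξ' (c, t')
  · -- within the same school
    obtain ⟨t', hlt⟩ := h
    have hSc1 : 1 ≤ ∑ u, ξ (c, u) := by
      have : ξ (c, t) ≤ ∑ u, ξ (c, u) :=
        Finset.single_le_sum (f := fun u => ξ (c, u)) (fun _ _ => Nat.zero_le _)
          (Finset.mem_univ t)
      omega
    have hSc1' : 1 ≤ ∑ u, ξ' (c, u) := by
      have : ξ' (c, t') ≤ ∑ u, ξ' (c, u) :=
        Finset.single_le_sum (f := fun u => ξ' (c, u)) (fun _ _ => Nat.zero_le _)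
          (Finset.mem_univ t')
      omega
    apply mem_of c t' hlt
    · intro d
      rw [school_sum_move ξ c c t t' hξ1 d]
      have h2 := hcap d
      rcases eq_or_ne d c with rfl | hd
      · rw [if_pos rfl]; omega
      · rw [if_neg hd]; omega
    · intro d
      have hξ'1 : 1 ≤ ξ' (c, t') := by omega
      rw [school_sum_move ξ' c c t' t hξ'1 d]
      have h2 := hcap' d
      rcases eq_or_ne d c with rfl | hd
      · rw [if_pos rfl]; omega
      · rw [if_neg hd]; omega
  · -- must move to another school
    push_neg at h
    have hSc : ∑ u, ξ' (c, u) < ∑ u, ξ (c, u) :=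
      Finset.sum_lt_sum (fun u _ => h u) ⟨t, Finset.mem_univ t, hi⟩
    have htot : ∑ d, ∑ u, ξ (d, u) = ∑ d, ∑ u, ξ' (d, u) := by
      rw [← Fintype.sum_prod_type, ← Fintype.sum_prod_type, hsum, hsum']
    have hex : ∃ c', ∑ u, ξ (c', u) < ∑ u, ξ' (c', u) := by
      by_contra hc
      push_neg at hc
      have : ∑ d, ∑ u, ξ' (d, u) < ∑ d, ∑ u, ξ (d, u) :=
        Finset.sum_lt_sum (fun d _ => hc d) ⟨c, Finset.mem_univ c, hSc⟩
      omega
    obtain ⟨c', hSc'⟩ := hex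
    have hcc : c' ≠ c := by
      intro h'; rw [h'] at hSc'; omega
    have hex2 : ∃ t', ξ (c', t') < ξ' (c', t') := by
      by_contra hc
      push_neg at hc
      have : ∑ u, ξ' (c', u) ≤ ∑ u, ξ (c', u) := Finset.sum_le_sum (fun u _ => hc u)
      omega
    obtain ⟨t', hlt⟩ := hex2
    apply mem_of c' t' hlt
    · intro d
      rw [school_sum_move ξ c c' t t' hξ1 d]
      have h1 : ∑ u, ξ (c', u) + 1 ≤ q c' := le_trans hSc' (hcap' c')
      have h2 := hcap d
      rcases eq_or_ne d c with rfl | hd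
      · rw [if_pos rfl, if_neg (fun h => hcc h.symm)]; omega
      · rw [if_neg hd]
        rcases eq_or_ne d c' with rfl | hd'
        · rw [if_pos rfl]; omega
        · rw [if_neg hd']; omega
    · intro d
      have hξ'1 : 1 ≤ ξ' (c', t') := by omega
      rw [school_sum_move ξ' c' c t' t hξ'1 d]
      have hSc2 : ∑ u, ξ' (c, u) + 1 ≤ q c := le_trans hSc (hcap c)
      have h2 := hcap' d
      rcases eq_or_ne d c' with rfl | hd
      · rw [if_pos rfl, if_neg hcc]; omega
      · rw [if_neg hd]
        rcases eq_or_ne d c with rfl | hd'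
        · rw [if_pos rfl]; omega
        · rw [if_neg hd']; omega
end

section
/- Let Ξ be the balanced-exchange policy: Ξ = {ξ : for every district d, ∑_t ∑_{c with d(c)=d} ξ_c^t = k_d}, where k_d is a fixed number for each district and each school c belongs to a district d(c). Then Ξ ∩ Ξ⁰ is an M-convex set. -/
open Finset

lemma sum_move {ι : Type*} [DecidableEq ι] (s : Finset ι) (ξ : ι → ℕ) (i j : ι)
    (h : 1 ≤ ξ i) :
    ∑ x ∈ s, move ξ i j x + (if i ∈ s then 1 else 0)
      = ∑ x ∈ s, ξ x + (if j ∈ s then 1 else 0) := by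
  have h1 : ∀ x, move ξ i j x + (if x = i then 1 else 0)
      = ξ x + (if x = j then 1 else 0) := by
    intro x
    by_cases hx : x = i <;> simp [move, hx] <;> omega
  calc ∑ x ∈ s, move ξ i j x + (if i ∈ s then 1 else 0)
      = ∑ x ∈ s, (move ξ i j x + (if x = i then 1 else 0)) := by
        rw [Finset.sum_add_distrib, Finset.sum_ite_eq' s i (fun _ => 1)]
    _ = ∑ x ∈ s, (ξ x + (if x = j then 1 else 0)) := by simp only [h1]
    _ = ∑ x ∈ s, ξ x + (if j ∈ s then 1 else 0) := by
        rw [Finset.sum_add_distrib, Finset.sum_ite_eq' s j (fun _ => 1)]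

lemma sum_move_rows {C T : Type*} [Fintype T] [DecidableEq C] [DecidableEq T]
    (s : Finset C) (ξ : C × T → ℕ) (c0 t0 c1 t1 : _) (h1 : 1 ≤ ξ (c0, t0)) :
    ∑ c ∈ s, ∑ t, move ξ (c0, t0) (c1, t1) (c, t) + (if c0 ∈ s then 1 else 0)
      = ∑ c ∈ s, ∑ t, ξ (c, t) + (if c1 ∈ s then 1 else 0) := by
  have := sum_move (s ×ˢ (univ : Finset T)) ξ (c0, t0) (c1, t1) h1
  simpa [Finset.sum_product, Finset.mem_product] using this

lemma move_mem {C T D : Type*} [Fintype C] [Fintype T]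
    [DecidableEq C] [DecidableEq T] [DecidableEq D]
    (q : C → ℕ) (dc : C → D) (k : D → ℕ) (ξ : C × T → ℕ)
    (hdist : ∀ d, ∑ c ∈ univ.filter (fun c => dc c = d), ∑ t, ξ (c, t) = k d)
    (hcap : ∀ c, ∑ t, ξ (c, t) ≤ q c)
    (c0 t0 c1 t1 : _) (hd : dc c1 = dc c0) (h1 : 1 ≤ ξ (c0, t0))
    (hc1 : c1 = c0 ∨ ∑ t, ξ (c1, t) < q c1) :
    (∀ d, ∑ c ∈ univ.filter (fun c => dc c = d),
        ∑ t, move ξ (c0, t0) (c1, t1) (c, t) = k d)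
    ∧ (∀ c, ∑ t, move ξ (c0, t0) (c1, t1) (c, t) ≤ q c)
    ∧ ∑ p, move ξ (c0, t0) (c1, t1) p = ∑ p, ξ p := by
  refine ⟨?_, ?_, ?_⟩
  · intro d
    have h := sum_move_rows (univ.filter (fun c => dc c = d)) ξ c0 t0 c1 t1 h1
    have := hdist d
    by_cases hcd : dc c0 = d <;>
      simp only [Finset.mem_filter, Finset.mem_univ, true_and, hcd, hd,
        if_true, if_false] at h <;> omega
  · intro c
    have h := sum_move_rows {c} ξ c0 t0 c1 t1 h1
    have hc := hcap c
    simp only [Finset.sum_singleton, Finset.mem_singleton] at h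
    by_cases h0 : c0 = c <;> by_cases hx : c1 = c
    · rw [if_pos h0, if_pos hx] at h; omega
    · rw [if_pos h0, if_neg hx] at h; omega
    · rw [if_neg h0, if_pos hx] at h
      rcases hc1 with rfl | hlt
      · exact absurd hx h0
      · rw [hx] at hlt; omega
    · rw [if_neg h0, if_neg hx] at h; omega
  · have h := sum_move (univ : Finset (C × T)) ξ (c0, t0) (c1, t1) h1
    simpa using h

/-- For the balanced-exchange policy (each district `d` is assigned exactly
`k d` students, summing over the schools of the district), `Ξ ∩ Ξ⁰` is an
M-convex set. -/
theorem balancedExchange_MConvex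
    {C T D : Type*} [Fintype C] [Fintype T] [Fintype D]
    [DecidableEq C] [DecidableEq T] [DecidableEq D]
    (N : ℕ) (q : C → ℕ) (dc : C → D) (k : D → ℕ)
    (hN : ∑ d, k d = N) :
    MConvex ({ξ : C × T → ℕ |
        ∀ d, ∑ c ∈ univ.filter (fun c => dc c = d), ∑ t, ξ (c, t) = k d}
      ∩ Xi0 (T := T) N q) := by
  rintro ξ ⟨hdist, hsum, hcap⟩ ξ' ⟨hdist', hsum', hcap'⟩ ⟨c0, t0⟩ hi
  have h1 : 1 ≤ ξ (c0, t0) := by omega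
  by_cases hex : ∃ t1, ξ (c0, t1) < ξ' (c0, t1)
  · obtain ⟨t1, ht1⟩ := hex
    refine ⟨(c0, t1), ht1, ?_, ?_⟩
    · obtain ⟨a, b, c⟩ := move_mem q dc k ξ hdist hcap c0 t0 c0 t1 rfl h1 (Or.inl rfl)
      exact ⟨a, by rw [c, hsum], b⟩
    · obtain ⟨a, b, c⟩ := move_mem q dc k ξ' hdist' hcap' c0 t1 c0 t0 rfl
        (by omega) (Or.inl rfl)
      exact ⟨a, by rw [c, hsum'], b⟩
  · push_neg at hex
    -- row c0 strictly dominates, so some other school in the district compensates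
    have hrow : ∑ t, ξ' (c0, t) < ∑ t, ξ (c0, t) :=
      Finset.sum_lt_sum (fun t _ => hex t) ⟨t0, Finset.mem_univ t0, hi⟩
    set F := univ.filter (fun c => dc c = dc c0) with hF
    have hc0F : c0 ∈ F := by simp [hF]
    have hFsum : ∑ c ∈ F, ∑ t, ξ (c, t) = ∑ c ∈ F, ∑ t, ξ' (c, t) := by
      rw [hdist (dc c0), hdist' (dc c0)]
    have hexc : ∃ c1 ∈ F.erase c0, ∑ t, ξ (c1, t) < ∑ t, ξ' (c1, t) := by
      by_contra hco
      push_neg at hco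
      have hle : ∑ c ∈ F.erase c0, ∑ t, ξ' (c, t) ≤ ∑ c ∈ F.erase c0, ∑ t, ξ (c, t) :=
        Finset.sum_le_sum hco
      rw [← Finset.add_sum_erase F _ hc0F, ← Finset.add_sum_erase F _ hc0F] at hFsum
      omega
    obtain ⟨c1, hc1e, hc1lt⟩ := hexc
    have hc1ne : c1 ≠ c0 := Finset.ne_of_mem_erase hc1e
    have hc1d : dc c1 = dc c0 := by
      have := Finset.mem_of_mem_erase hc1e
      simpa [hF] using this
    have hext : ∃ t1, ξ (c1, t1) < ξ' (c1, t1) := by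
      by_contra hco
      push_neg at hco
      exact absurd (Finset.sum_le_sum (fun t (_ : t ∈ univ) => hco t)) (by omega)
    obtain ⟨t1, ht1⟩ := hext
    refine ⟨(c1, t1), ht1, ?_, ?_⟩
    · obtain ⟨a, b, c⟩ := move_mem q dc k ξ hdist hcap c0 t0 c1 t1 hc1d h1
        (Or.inr (lt_of_lt_of_le hc1lt (hcap' c1)))
      exact ⟨a, by rw [c, hsum], b⟩
    · obtain ⟨a, b, c⟩ := move_mem q dc k ξ' hdist' hcap' c1 t1 c0 t0 hc1d.symm
        (by omega) (Or.inr (lt_of_lt_of_le hrow (hcap c0)))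
      exact ⟨a, by rw [c, hsum'], b⟩
end

section
/- In the stable matching setting with district choice functions, if every district's admissions rule is acceptant and rationed, then in any stable matching X in which district choice functions are acceptant and rationed, every student is matched and each district d is matched with exactly k_d students. -/
open Finset

section

variable {S D C : Type*} [Fintype S] [Fintype C] [Fintype D]
  [DecidableEq S] [DecidableEq C] [DecidableEq D]

/-- A matching is feasible for students: each student has at most one contract. -/
def feasibleS (X : Finset (S × C)) : Prop :=
  ∀ s : S, (X.filter (fun x => x.1 = s)).card ≤ 1

/-- A matching is feasible: feasible for students and each school `c` is
assigned at most `q c` contracts. -/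
def feasible (q : C → ℕ) (X : Finset (S × C)) : Prop :=
  feasibleS X ∧ ∀ c : C, (X.filter (fun x => x.2 = c)).card ≤ q c

/-- Stability of a matching `X` with respect to district choice functions
`Ch` and student preferences `P` (every contract preferred to being
unmatched). -/
def stable (dc : C → D) (q : C → ℕ)
    (Ch : D → Finset (S × C) → Finset (S × C))
    (P : S → C → C → Prop) (X : Finset (S × C)) : Prop :=
  feasible q X ∧
  (∀ d, Ch d X = X.filter (fun x => dc x.2 = d)) ∧
  ∀ s c, (s, c) ∉ X → (∀ y ∈ X, y.1 = s → P s c y.2) →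
    (s, c) ∉ Ch (dc c) (insert (s, c) X)

/-- If every district's admissions rule is acceptant and rationed, then in
any stable matching every student is matched and each district `d` is
matched with exactly `k d` students. -/
theorem stable_balanced
    (ds : S → D) (dc : C → D) (q : C → ℕ) (k : D → ℕ)
    (hk : ∀ d, k d = (univ.filter (fun s => ds s = d)).card)
    (hcap : ∀ d, k d ≤ ∑ c ∈ univ.filter (fun c => dc c = d), q c)
    (Ch : D → Finset (S × C) → Finset (S × C))
    (hsub : ∀ d X, Ch d X ⊆ X.filter (fun x => dc x.2 = d))
    (hacc : ∀ d X (x : S × C), feasibleS X → x ∈ X → dc x.2 = d → x ∉ Ch d X →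
      ((Ch d X).filter (fun y => y.2 = x.2)).card = q x.2 ∨ k d ≤ (Ch d X).card)
    (hrat : ∀ d X, feasibleS X → (Ch d X).card ≤ k d)
    (P : S → C → C → Prop)
    (X : Finset (S × C)) (hX : stable dc q Ch P X) :
    (∀ s : S, ∃ c : C, (s, c) ∈ X) ∧
    (∀ d : D, (X.filter (fun x => dc x.2 = d)).card = k d) := by
  obtain ⟨⟨hfs, hfc⟩, hch, hblock⟩ := hX
  have hXsum : X.card = ∑ d, (X.filter (fun x => dc x.2 = d)).card :=
    Finset.card_eq_sum_card_fiberwise (fun x _ => Finset.mem_univ (dc x.2))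
  have hsumk : ∑ d, k d = Fintype.card S := by
    have := Finset.card_eq_sum_card_fiberwise
      (s := (Finset.univ : Finset S)) (f := fun s : S => ds s) (t := Finset.univ)
      (fun x _ => Finset.mem_univ (ds x))
    simp only [hk, Finset.card_univ] at *
    omega
  have hle : ∀ d, (X.filter (fun x => dc x.2 = d)).card ≤ k d := by
    intro d
    have := hrat d X hfs
    rwa [hch d] at this
  have hge : ∀ d, k d ≤ (X.filter (fun x => dc x.2 = d)).card := by
    by_contra h
    push_neg at h
    obtain ⟨d0, hd0⟩ := h
    have hstrict : X.card < ∑ d, k d := by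
      rw [hXsum]
      exact Finset.sum_lt_sum (fun d _ => hle d) ⟨d0, Finset.mem_univ _, hd0⟩
    -- there is an unmatched student
    have hun : ∃ s : S, ∀ c, (s, c) ∉ X := by
      by_contra h
      push_neg at h
      choose f hf using h
      have hcard : Fintype.card S ≤ X.card := by
        have := Finset.card_le_card_of_injOn (s := (Finset.univ : Finset S))
          (fun s : S => (s, f s))
          (fun s _ => hf s) (fun a _ b _ hab => congrArg Prod.fst hab)
        simpa using this
      omega
    obtain ⟨s0, hs0⟩ := hun
    -- a school in d0 with slack
    have hfib : (X.filter (fun x => dc x.2 = d0)).card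
        = ∑ c ∈ Finset.univ.filter (fun c => dc c = d0),
            (X.filter (fun x => x.2 = c)).card := by
      rw [Finset.card_eq_sum_card_fiberwise
        (f := fun x : S × C => x.2) (t := Finset.univ.filter (fun c => dc c = d0))
        (fun x hx => by
          simp only [Finset.mem_filter] at hx ⊢
          exact Finset.mem_filter.mpr ⟨Finset.mem_univ _, (Finset.mem_filter.mp hx).2⟩)]
      refine Finset.sum_congr rfl (fun c hc => ?_)
      simp only [Finset.mem_filter, Finset.mem_univ, true_and] at hc
      congr 1
      ext x
      simp only [Finset.mem_filter]
      constructor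
      · rintro ⟨⟨hxX, -⟩, hxc⟩; exact ⟨hxX, hxc⟩
      · rintro ⟨hxX, hxc⟩; exact ⟨⟨hxX, by rw [hxc, hc]⟩, hxc⟩
    have hslack : ∃ c, dc c = d0 ∧ (X.filter (fun x => x.2 = c)).card < q c := by
      by_contra h
      push_neg at h
      have : ∑ c ∈ Finset.univ.filter (fun c => dc c = d0), q c
          ≤ (X.filter (fun x => dc x.2 = d0)).card := by
        rw [hfib]
        refine Finset.sum_le_sum (fun c hc => ?_)
        simp only [Finset.mem_filter, Finset.mem_univ, true_and] at hc
        exact h c hc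
      have := hcap d0
      omega
    obtain ⟨c0, hc0d, hc0⟩ := hslack
    have hs0X : (s0, c0) ∉ X := hs0 c0
    set X' : Finset (S × C) := insert (s0, c0) X with hX'
    have hfeasS' : feasibleS X' := by
      intro t
      rw [hX', Finset.filter_insert]
      by_cases ht : t = s0
      · subst ht
        have hempty : X.filter (fun x => x.1 = t) = ∅ := by
          rw [Finset.filter_eq_empty_iff]
          rintro ⟨a, b⟩ hab rfl
          exact hs0 b hab
        simp [hempty]
      · have : ((s0, c0).1 = t) = False := by simp [Ne.symm ht]
        simp only [this, if_false]
        exact hfs t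
    have hnotch : (s0, c0) ∉ Ch d0 X' := by
      have := hblock s0 c0 hs0X (fun y hy hys => by
        exact absurd (show (s0, y.2) ∈ X by rw [← hys]; exact hy) (hs0 y.2))
      rwa [hc0d] at this
    have hchsub : Ch d0 X' ⊆ X.filter (fun x => dc x.2 = d0) := by
      intro x hx
      have hx' := hsub d0 X' hx
      rw [hX', Finset.filter_insert, if_pos (show dc (s0, c0).2 = d0 from hc0d)] at hx'
      rw [Finset.mem_insert] at hx'
      rcases hx' with rfl | hx'
      · exact absurd hx hnotch
      · exact hx'
    rcases hacc d0 X' (s0, c0) hfeasS' (Finset.mem_insert_self _ _) hc0d hnotch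
      with hq | hkd
    · have hss : (Ch d0 X').filter (fun y => y.2 = c0)
          ⊆ X.filter (fun x => x.2 = c0) := by
        intro x hx
        simp only [Finset.mem_filter] at hx ⊢
        exact ⟨(Finset.mem_filter.mp (hchsub hx.1)).1, hx.2⟩
      have := Finset.card_le_card hss
      simp only at hq
      omega
    · have := Finset.card_le_card hchsub
      omega
  have heq : ∀ d, (X.filter (fun x => dc x.2 = d)).card = k d :=
    fun d => le_antisymm (hle d) (hge d)
  refine ⟨?_, heq⟩
  intro s
  by_contra h
  push_neg at h
  have hempty : X.filter (fun x => x.1 = s) = ∅ := by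
    rw [Finset.filter_eq_empty_iff]
    rintro ⟨a, b⟩ hab rfl
    exact h b hab
  have hXcard : X.card = Fintype.card S := by
    rw [hXsum, ← hsumk]
    exact Finset.sum_congr rfl (fun d _ => heq d)
  have hXS : X.card = ∑ t : S, (X.filter (fun x => x.1 = t)).card :=
    Finset.card_eq_sum_card_fiberwise (fun x _ => Finset.mem_univ x.1)
  have hsplit : ∑ t : S, (X.filter (fun x => x.1 = t)).card
      = (X.filter (fun x => x.1 = s)).card
        + ∑ t ∈ Finset.univ.erase s, (X.filter (fun x => x.1 = t)).card :=
    (Finset.add_sum_erase _ _ (Finset.mem_univ s)).symm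
  have hbound : ∑ t ∈ Finset.univ.erase s, (X.filter (fun x => x.1 = t)).card
      ≤ (Finset.univ.erase s).card := by
    calc ∑ t ∈ Finset.univ.erase s, (X.filter (fun x => x.1 = t)).card
        ≤ ∑ t ∈ Finset.univ.erase s, 1 := Finset.sum_le_sum (fun t _ => hfs t)
      _ = (Finset.univ.erase s).card := by simp
  have hcerase : (Finset.univ.erase s).card = Fintype.card S - 1 := by
    rw [Finset.card_erase_of_mem (Finset.mem_univ s), Finset.card_univ]
  have hpos : 1 ≤ Fintype.card S := Fintype.card_pos_iff.mpr ⟨s⟩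
  rw [hempty] at hsplit
  simp only [Finset.card_empty] at hsplit
  omega

end
end

section
/- If each district's admissions rule has type-specific reserves with ∑_c r_c^t = k^t for every type t (where k^t is the number of type-t students), then the profile of district admissions rules accommodates unmatched students. -/
open Finset

section

variable {S D C T : Type*} [Fintype S] [Fintype C] [Fintype D] [Fintype T]
  [DecidableEq S] [DecidableEq C] [DecidableEq D] [DecidableEq T]

/-- The profile of district admissions rules accommodates unmatched students. -/
def accommodates (dc : C → D) (q : C → ℕ)
    (Ch : D → Finset (S × C) → Finset (S × C)) : Prop :=
  ∀ (s : S) (X : Finset (S × C)), feasible q X → (∀ c, (s, c) ∉ X) →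
    ∃ c, (s, c) ∈ Ch (dc c) (insert (s, c) X)

/-- The rule of the district of school `c` has a reserve of `r c t` for
type-`t` students at `c`. -/
def hasReserves (dc : C → D) (q : C → ℕ) (τ : S → T) (r : C → T → ℕ)
    (Ch : D → Finset (S × C) → Finset (S × C)) : Prop :=
  ∀ (c : C) (s : S) (X : Finset (S × C)), feasible q X →
    (∀ c', (s, c') ∉ X) →
    (X.filter (fun y => y.2 = c ∧ τ y.1 = τ s)).card < r c (τ s) →
    (s, c) ∈ Ch (dc c) (insert (s, c) X)

/-- If district admissions rules have type-specific reserves with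
`∑_c r_c^t = k^t` for every type `t` (where `k^t` is the number of type-`t`
students), then the profile of district admissions rules accommodates
unmatched students. -/
theorem reserves_accommodate
    (dc : C → D) (q : C → ℕ) (τ : S → T) (kt : T → ℕ)
    (hkt : ∀ t, kt t = (univ.filter (fun s => τ s = t)).card)
    (r : C → T → ℕ) (hr : ∀ t, ∑ c, r c t = kt t)
    (Ch : D → Finset (S × C) → Finset (S × C))
    (hres : hasReserves dc q τ r Ch) :
    accommodates dc q Ch := by
  intro s X hX hsX
  set t := τ s with ht
  -- sum over schools of type-t contracts equals total type-t contracts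
  have hsum : ∑ c, (X.filter (fun y => y.2 = c ∧ τ y.1 = t)).card
      = (X.filter (fun y => τ y.1 = t)).card := by
    rw [Finset.card_eq_sum_card_fiberwise (f := Prod.snd) (t := (univ : Finset C))
      (fun y _ => mem_univ _)]
    refine Finset.sum_congr rfl fun c _ => ?_
    congr 1
    rw [Finset.filter_filter]
    refine Finset.filter_congr fun y _ => ?_
    constructor
    · rintro ⟨h1, h2⟩; exact ⟨h2, h1⟩
    · rintro ⟨h1, h2⟩; exact ⟨h2, h1⟩
  -- type-t contracts inject into type-t students other than s
  have hle : (X.filter (fun y => τ y.1 = t)).card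
      ≤ ((univ.filter (fun s' => τ s' = t)).erase s).card := by
    apply Finset.card_le_card_of_injOn (fun y => y.1)
    · intro y hy
      rw [Finset.mem_coe, Finset.mem_filter] at hy
      rw [Finset.mem_coe, Finset.mem_erase]
      refine ⟨?_, by simp [hy.2]⟩
      intro h
      have := hsX y.2
      rw [← h] at this
      exact this hy.1
    · intro y1 h1 y2 h2 he
      rw [Finset.mem_coe, Finset.mem_filter] at h1 h2
      have hf := hX.1 y1.1
      have m1 : y1 ∈ X.filter (fun x => x.1 = y1.1) := by
        rw [Finset.mem_filter]; exact ⟨h1.1, rfl⟩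
      have m2 : y2 ∈ X.filter (fun x => x.1 = y1.1) := by
        rw [Finset.mem_filter]; exact ⟨h2.1, he.symm⟩
      have := Finset.card_le_one.mp hf y1 m1 y2 m2
      exact this.symm ▸ rfl
  have hsmem : s ∈ univ.filter (fun s' => τ s' = t) := by
    simp [ht]
  have hlt : (X.filter (fun y => τ y.1 = t)).card < kt t := by
    calc (X.filter (fun y => τ y.1 = t)).card
        ≤ ((univ.filter (fun s' => τ s' = t)).erase s).card := hle
      _ < (univ.filter (fun s' => τ s' = t)).card :=
          Finset.card_erase_lt_of_mem hsmem
      _ = kt t := (hkt t).symm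
  have hex : ∃ c ∈ (univ : Finset C),
      (X.filter (fun y => y.2 = c ∧ τ y.1 = t)).card < r c t := by
    apply Finset.exists_lt_of_sum_lt
    rw [hsum, hr t]
    exact hlt
  obtain ⟨c, _, hc⟩ := hex
  exact ⟨c, hres c s X hX hsX hc⟩

end
end

section
/- Impossibility of district-level ceilings with efficiency: in the six-student, six-school, two-district instance with type ceilings q_d^{t₁} = q_d^{t₂} = 1 for both districts and the given student preferences, exactly two matchings X and X' satisfy the policy goal, constrained efficiency, and individual rationality; and for any mechanism selecting one of them at the true profile, some student has a profitable misreport. Hence no mechanism satisfies the policy goal, constrained efficiency, individual rationality, and strategy-proofness. -/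
open Finset

/- Six students `s₁,…,s₆ = 0,…,5`, six schools `c₁,…,c₆ = 0,…,5`.
Schools `0,1,2` are in district `d₁ = 0`, schools `3,4,5` in district
`d₂ = 1`.  Preferences of a student are encoded by a permutation giving the
rank of each school (smaller rank = more preferred). -/

/-- District of each school. -/
def distOf (c : Fin 6) : Fin 2 := if c.val < 3 then 0 else 1

/-- Types of the six students: `s₁,s₄` of type `t₁ = 0`, `s₂,s₅` of type
`t₂ = 1`, `s₃,s₆` of type `t₃ = 2`. -/
def typeOf : Fin 6 → Fin 3 := ![0, 1, 2, 0, 1, 2]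

/-- A matching assigns each student to at most one school. -/
abbrev Matching := Fin 6 → Option (Fin 6)

/-- Each school has capacity one. -/
def Feasible (μ : Matching) : Prop :=
  ∀ s s' c, μ s = some c → μ s' = some c → s = s'

/-- Weak preference between outcomes, being unmatched worst. -/
def wPref (P : Equiv.Perm (Fin 6)) : Option (Fin 6) → Option (Fin 6) → Prop
  | some c, some c' => P c ≤ P c'
  | some _, none => True
  | none, some _ => False
  | none, none => True

/-- The policy goal Ξ: at most one type-`t₁` and at most one type-`t₂`
student per district. -/
def Policy (μ : Matching) : Prop :=
  ∀ d : Fin 2, ∀ t : Fin 3, t ≠ 2 →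
    (univ.filter (fun s : Fin 6 =>
      typeOf s = t ∧ ∃ c, μ s = some c ∧ distOf c = d)).card ≤ 1

/-- Pareto domination of `μ` by `μ'` at profile `P`. -/
def Dominates (P : Fin 6 → Equiv.Perm (Fin 6)) (μ' μ : Matching) : Prop :=
  (∀ s, wPref (P s) (μ' s) (μ s)) ∧ ∃ s, μ' s ≠ μ s ∧ wPref (P s) (μ' s) (μ s)

/-- Constrained efficiency: satisfies the policy goal and is not Pareto
dominated by a feasible matching satisfying the policy goal. -/
def ConstrEff (P : Fin 6 → Equiv.Perm (Fin 6)) (μ : Matching) : Prop :=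
  Policy μ ∧ ¬ ∃ μ', Feasible μ' ∧ Policy μ' ∧ Dominates P μ' μ

/-- Individual rationality relative to the initial matching `sᵢ ↦ cᵢ`. -/
def IR (P : Fin 6 → Equiv.Perm (Fin 6)) (μ : Matching) : Prop :=
  ∀ s : Fin 6, wPref (P s) (μ s) (some s)

/-- The true preference profile of Example 5 (`…` parts arbitrary):
`s₁: c₆ ≻ c₁ ≻ ⋯`, `s₂: c₆ ≻ c₂ ≻ ⋯`, `s₃: c₅ ≻ c₄ ≻ c₃ ≻ ⋯`,
`s₄: c₃ ≻ c₄ ≻ ⋯`, `s₅: c₃ ≻ c₅ ≻ ⋯`, `s₆: c₁ ≻ c₂ ≻ c₆ ≻ ⋯`. -/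
def Consistent (P : Fin 6 → Equiv.Perm (Fin 6)) : Prop :=
  (P 0 5 < P 0 0 ∧ ∀ c, c ≠ 5 → c ≠ 0 → P 0 0 < P 0 c) ∧
  (P 1 5 < P 1 1 ∧ ∀ c, c ≠ 5 → c ≠ 1 → P 1 1 < P 1 c) ∧
  (P 2 4 < P 2 3 ∧ P 2 3 < P 2 2 ∧ ∀ c, c ≠ 4 → c ≠ 3 → c ≠ 2 → P 2 2 < P 2 c) ∧
  (P 3 2 < P 3 3 ∧ ∀ c, c ≠ 2 → c ≠ 3 → P 3 3 < P 3 c) ∧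
  (P 4 2 < P 4 4 ∧ ∀ c, c ≠ 2 → c ≠ 4 → P 4 4 < P 4 c) ∧
  (P 5 0 < P 5 1 ∧ P 5 1 < P 5 5 ∧ ∀ c, c ≠ 0 → c ≠ 1 → c ≠ 5 → P 5 5 < P 5 c)

/-- The matching X of Example 5. -/
def Xm : Matching := fun s => some (![5, 1, 3, 2, 4, 0] s)

/-- The matching X' of Example 5. -/
def Xm' : Matching := fun s => some (![0, 5, 4, 3, 2, 1] s)

lemma feasXm : Feasible Xm := by unfold Feasible; decide
lemma polXm : Policy Xm := by unfold Policy; decide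
lemma feasXm' : Feasible Xm' := by unfold Feasible; decide
lemma polXm' : Policy Xm' := by unfold Policy; decide

lemma acc {q : Equiv.Perm (Fin 6)} {o : Option (Fin 6)} {b : Fin 6}
    (h : wPref q o (some b)) : ∃ c, o = some c ∧ q c ≤ q b := by
  cases o with
  | none => exact absurd h (by simp [wPref])
  | some c => exact ⟨c, rfl, h⟩

lemma policy_pair {μ : Matching} (hPol : Policy μ) {i j c c' : Fin 6}
    (hij : i ≠ j) (ht : typeOf j = typeOf i) (ht2 : typeOf i ≠ 2)
    (hi : μ i = some c) (hj : μ j = some c') (hd : distOf c' = distOf c) : False := by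
  have h := hPol (distOf c) (typeOf i) ht2
  have hsub : ({i, j} : Finset (Fin 6)) ⊆ univ.filter (fun s : Fin 6 =>
      typeOf s = typeOf i ∧ ∃ c₀, μ s = some c₀ ∧ distOf c₀ = distOf c) := by
    intro x hx
    simp only [mem_insert, mem_singleton] at hx
    rcases hx with rfl | rfl
    · exact mem_filter.2 ⟨mem_univ _, rfl, c, hi, rfl⟩
    · exact mem_filter.2 ⟨mem_univ _, ht, c', hj, hd⟩
  have := (card_le_card hsub).trans h
  rw [card_insert_of_notMem (by simpa using hij), card_singleton] at this
  omega

lemma dom_helperX {P : Fin 6 → Equiv.Perm (Fin 6)} {μ : Matching}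
    (k0 : P 0 5 < P 0 0) (k2 : P 2 3 < P 2 2)
    (k3 : P 3 2 < P 3 3) (k5 : P 5 0 < P 5 5)
    (h0 : μ 0 = some 0) (h1 : μ 1 = some 1) (h2 : μ 2 = some 2)
    (h3 : μ 3 = some 3) (h4 : μ 4 = some 4) (h5 : μ 5 = some 5) :
    Dominates P Xm μ := by
  refine ⟨fun s => ?_, 0, by rw [h0]; simp [Xm], by rw [h0]; exact le_of_lt k0⟩
  fin_cases s
  · show wPref (P 0) (Xm 0) (μ 0); rw [h0]; exact le_of_lt k0
  · show wPref (P 1) (Xm 1) (μ 1); rw [h1]; exact le_refl _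
  · show wPref (P 2) (Xm 2) (μ 2); rw [h2]; exact le_of_lt k2
  · show wPref (P 3) (Xm 3) (μ 3); rw [h3]; exact le_of_lt k3
  · show wPref (P 4) (Xm 4) (μ 4); rw [h4]; exact le_refl _
  · show wPref (P 5) (Xm 5) (μ 5); rw [h5]; exact le_of_lt k5

lemma dom_helperX' {P : Fin 6 → Equiv.Perm (Fin 6)} {μ : Matching}
    (k1 : P 1 5 < P 1 1) (k2 : P 2 4 < P 2 2)
    (k4 : P 4 2 < P 4 4) (k5 : P 5 1 < P 5 5)
    (h0 : μ 0 = some 0) (h1 : μ 1 = some 1) (h2 : μ 2 = some 2)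
    (h3 : μ 3 = some 3) (h4 : μ 4 = some 4) (h5 : μ 5 = some 5) :
    Dominates P Xm' μ := by
  refine ⟨fun s => ?_, 1, by rw [h1]; simp [Xm'], by rw [h1]; exact le_of_lt k1⟩
  fin_cases s
  · show wPref (P 0) (Xm' 0) (μ 0); rw [h0]; exact le_refl _
  · show wPref (P 1) (Xm' 1) (μ 1); rw [h1]; exact le_of_lt k1
  · show wPref (P 2) (Xm' 2) (μ 2); rw [h2]; exact le_of_lt k2
  · show wPref (P 3) (Xm' 3) (μ 3); rw [h3]; exact le_refl _
  · show wPref (P 4) (Xm' 4) (μ 4); rw [h4]; exact le_of_lt k4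
  · show wPref (P 5) (Xm' 5) (μ 5); rw [h5]; exact le_of_lt k5
theorem keyTrue (P : Fin 6 → Equiv.Perm (Fin 6)) (hP : Consistent P) (μ : Matching) :
    (Feasible μ ∧ Policy μ ∧ ConstrEff P μ ∧ IR P μ) ↔ (μ = Xm ∨ μ = Xm') := by
  obtain ⟨⟨a0, b0⟩, ⟨a1, b1⟩, ⟨a2, a2', b2⟩, ⟨a3, b3⟩, ⟨a4, b4⟩, ⟨a5, a5', b5⟩⟩ := hP
  constructor
  · rintro ⟨hF, hPol, hCE, hIR⟩
    have m0 : μ 0 = some 0 ∨ μ 0 = some 5 := by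
      obtain ⟨c, hc, hle⟩ := acc (hIR 0); rw [hc]
      fin_cases c <;>
        first
          | exact .inl rfl
          | exact .inr rfl
          | exact absurd hle (not_le.2 (b0 _ (by decide) (by decide)))
    have m1 : μ 1 = some 1 ∨ μ 1 = some 5 := by
      obtain ⟨c, hc, hle⟩ := acc (hIR 1); rw [hc]
      fin_cases c <;>
        first
          | exact .inl rfl
          | exact .inr rfl
          | exact absurd hle (not_le.2 (b1 _ (by decide) (by decide)))
    have m2 : μ 2 = some 2 ∨ μ 2 = some 3 ∨ μ 2 = some 4 := by
      obtain ⟨c, hc, hle⟩ := acc (hIR 2); rw [hc]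
      fin_cases c <;>
        first
          | exact .inl rfl
          | exact .inr (.inl rfl)
          | exact .inr (.inr rfl)
          | exact absurd hle (not_le.2 (b2 _ (by decide) (by decide) (by decide)))
    have m3 : μ 3 = some 3 ∨ μ 3 = some 2 := by
      obtain ⟨c, hc, hle⟩ := acc (hIR 3); rw [hc]
      fin_cases c <;>
        first
          | exact .inl rfl
          | exact .inr rfl
          | exact absurd hle (not_le.2 (b3 _ (by decide) (by decide)))
    have m4 : μ 4 = some 4 ∨ μ 4 = some 2 := by
      obtain ⟨c, hc, hle⟩ := acc (hIR 4); rw [hc]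
      fin_cases c <;>
        first
          | exact .inl rfl
          | exact .inr rfl
          | exact absurd hle (not_le.2 (b4 _ (by decide) (by decide)))
    have m5 : μ 5 = some 5 ∨ μ 5 = some 0 ∨ μ 5 = some 1 := by
      obtain ⟨c, hc, hle⟩ := acc (hIR 5); rw [hc]
      fin_cases c <;>
        first
          | exact .inl rfl
          | exact .inr (.inl rfl)
          | exact .inr (.inr rfl)
          | exact absurd hle (not_le.2 (b5 _ (by decide) (by decide) (by decide)))
    rcases m0 with h0 | h0 <;> rcases m1 with h1 | h1 <;>
      rcases m2 with h2 | h2 | h2 <;> rcases m3 with h3 | h3 <;>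
      rcases m4 with h4 | h4 <;> rcases m5 with h5 | h5 | h5 <;>
      first
        | (left; funext s; fin_cases s <;>
              first | exact h0 | exact h1 | exact h2 | exact h3 | exact h4 | exact h5)
        | (right; funext s; fin_cases s <;>
              first | exact h0 | exact h1 | exact h2 | exact h3 | exact h4 | exact h5)
        | exact absurd (hF 0 1 _ h0 h1) (by decide)
        | exact absurd (hF 0 5 _ h0 h5) (by decide)
        | exact absurd (hF 1 5 _ h1 h5) (by decide)
        | exact absurd (hF 2 3 _ h2 h3) (by decide)
        | exact absurd (hF 2 4 _ h2 h4) (by decide)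
        | exact absurd (hF 3 4 _ h3 h4) (by decide)
        | exact (policy_pair hPol (show (0:Fin 6) ≠ 3 by decide) (by decide) (by decide) h0 h3 (by decide)).elim
        | exact (policy_pair hPol (show (1:Fin 6) ≠ 4 by decide) (by decide) (by decide) h1 h4 (by decide)).elim
        | exact absurd ⟨Xm, feasXm, polXm, dom_helperX a0 a2' a3 (a5.trans a5') h0 h1 h2 h3 h4 h5⟩ hCE.2
  · rintro (rfl | rfl)
    · refine ⟨feasXm, polXm, ⟨polXm, ?_⟩, ?_⟩
      · rintro ⟨μ', hF', hPol', hall, s₀, hne, -⟩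
        have n0 : μ' 0 = some 5 := by
          obtain ⟨c, hc, hle⟩ := acc (hall 0); rw [hc]
          fin_cases c <;>
            first
              | rfl
              | exact absurd hle (not_le.2 a0)
              | exact absurd hle (not_le.2 (a0.trans (b0 _ (by decide) (by decide))))
        have n1 : μ' 1 = some 5 ∨ μ' 1 = some 1 := by
          obtain ⟨c, hc, hle⟩ := acc (hall 1); rw [hc]
          fin_cases c <;>
            first
              | exact .inl rfl
              | exact .inr rfl
              | exact absurd hle (not_le.2 (b1 _ (by decide) (by decide)))
        have n2 : μ' 2 = some 4 ∨ μ' 2 = some 3 := by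
          obtain ⟨c, hc, hle⟩ := acc (hall 2); rw [hc]
          fin_cases c <;>
            first
              | exact .inl rfl
              | exact .inr rfl
              | exact absurd hle (not_le.2 a2')
              | exact absurd hle (not_le.2 (a2'.trans (b2 _ (by decide) (by decide) (by decide))))
        have n3 : μ' 3 = some 2 := by
          obtain ⟨c, hc, hle⟩ := acc (hall 3); rw [hc]
          fin_cases c <;>
            first
              | rfl
              | exact absurd hle (not_le.2 a3)
              | exact absurd hle (not_le.2 (a3.trans (b3 _ (by decide) (by decide))))
        have n4 : μ' 4 = some 2 ∨ μ' 4 = some 4 := by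
          obtain ⟨c, hc, hle⟩ := acc (hall 4); rw [hc]
          fin_cases c <;>
            first
              | exact .inl rfl
              | exact .inr rfl
              | exact absurd hle (not_le.2 (b4 _ (by decide) (by decide)))
        have n5 : μ' 5 = some 0 := by
          obtain ⟨c, hc, hle⟩ := acc (hall 5); rw [hc]
          fin_cases c <;>
            first
              | rfl
              | exact absurd hle (not_le.2 a5)
              | exact absurd hle (not_le.2 (a5.trans a5'))
              | exact absurd hle (not_le.2 (a5.trans (a5'.trans (b5 _ (by decide) (by decide) (by decide)))))
        have e1 : μ' 1 = some 1 := by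
          rcases n1 with h | h
          · exact absurd (hF' 0 1 5 n0 h) (by decide)
          · exact h
        have e4 : μ' 4 = some 4 := by
          rcases n4 with h | h
          · exact absurd (hF' 3 4 2 n3 h) (by decide)
          · exact h
        have e2 : μ' 2 = some 3 := by
          rcases n2 with h | h
          · exact absurd (hF' 2 4 4 h e4) (by decide)
          · exact h
        fin_cases s₀ <;>
          first
            | exact hne n0
            | exact hne e1
            | exact hne e2
            | exact hne n3
            | exact hne e4
            | exact hne n5
      · intro s
        fin_cases s <;>
          first
            | exact le_of_lt a0
            | exact le_refl _
            | exact le_of_lt a2'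
            | exact le_of_lt a3
            | exact le_of_lt (a5.trans a5')
    · refine ⟨feasXm', polXm', ⟨polXm', ?_⟩, ?_⟩
      · rintro ⟨μ', hF', hPol', hall, s₀, hne, -⟩
        have n0 : μ' 0 = some 5 ∨ μ' 0 = some 0 := by
          obtain ⟨c, hc, hle⟩ := acc (hall 0); rw [hc]
          fin_cases c <;>
            first
              | exact .inl rfl
              | exact .inr rfl
              | exact absurd hle (not_le.2 (b0 _ (by decide) (by decide)))
        have n1 : μ' 1 = some 5 := by
          obtain ⟨c, hc, hle⟩ := acc (hall 1); rw [hc]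
          fin_cases c <;>
            first
              | rfl
              | exact absurd hle (not_le.2 a1)
              | exact absurd hle (not_le.2 (a1.trans (b1 _ (by decide) (by decide))))
        have n2 : μ' 2 = some 4 := by
          obtain ⟨c, hc, hle⟩ := acc (hall 2); rw [hc]
          fin_cases c <;>
            first
              | rfl
              | exact absurd hle (not_le.2 a2)
              | exact absurd hle (not_le.2 (a2.trans a2'))
              | exact absurd hle (not_le.2 (a2.trans (a2'.trans (b2 _ (by decide) (by decide) (by decide)))))
        have n3 : μ' 3 = some 2 ∨ μ' 3 = some 3 := by
          obtain ⟨c, hc, hle⟩ := acc (hall 3); rw [hc]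
          fin_cases c <;>
            first
              | exact .inl rfl
              | exact .inr rfl
              | exact absurd hle (not_le.2 (b3 _ (by decide) (by decide)))
        have n4 : μ' 4 = some 2 := by
          obtain ⟨c, hc, hle⟩ := acc (hall 4); rw [hc]
          fin_cases c <;>
            first
              | rfl
              | exact absurd hle (not_le.2 a4)
              | exact absurd hle (not_le.2 (a4.trans (b4 _ (by decide) (by decide))))
        have n5 : μ' 5 = some 0 ∨ μ' 5 = some 1 := by
          obtain ⟨c, hc, hle⟩ := acc (hall 5); rw [hc]
          fin_cases c <;>
            first
              | exact .inl rfl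
              | exact .inr rfl
              | exact absurd hle (not_le.2 a5')
              | exact absurd hle (not_le.2 (a5'.trans (b5 _ (by decide) (by decide) (by decide))))
        have e0 : μ' 0 = some 0 := by
          rcases n0 with h | h
          · exact absurd (hF' 0 1 5 h n1) (by decide)
          · exact h
        have e3 : μ' 3 = some 3 := by
          rcases n3 with h | h
          · exact absurd (hF' 3 4 2 h n4) (by decide)
          · exact h
        have e5 : μ' 5 = some 1 := by
          rcases n5 with h | h
          · exact absurd (hF' 0 5 0 e0 h) (by decide)
          · exact h
        fin_cases s₀ <;>
          first
            | exact hne e0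
            | exact hne n1
            | exact hne n2
            | exact hne e3
            | exact hne n4
            | exact hne e5
      · intro s
        fin_cases s <;>
          first
            | exact le_refl _
            | exact le_of_lt a1
            | exact le_of_lt (a2.trans a2')
            | exact le_of_lt a4
            | exact le_of_lt a5'

/-- Modified consistency after student 2 misreports `c₅ ≻ c₃ ≻ ⋯`. -/
def Consistent₂ (P : Fin 6 → Equiv.Perm (Fin 6)) : Prop :=
  (P 0 5 < P 0 0 ∧ ∀ c, c ≠ 5 → c ≠ 0 → P 0 0 < P 0 c) ∧
  (P 1 5 < P 1 1 ∧ ∀ c, c ≠ 5 → c ≠ 1 → P 1 1 < P 1 c) ∧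
  (P 2 4 < P 2 2 ∧ ∀ c, c ≠ 4 → c ≠ 2 → P 2 2 < P 2 c) ∧
  (P 3 2 < P 3 3 ∧ ∀ c, c ≠ 2 → c ≠ 3 → P 3 3 < P 3 c) ∧
  (P 4 2 < P 4 4 ∧ ∀ c, c ≠ 2 → c ≠ 4 → P 4 4 < P 4 c) ∧
  (P 5 0 < P 5 1 ∧ P 5 1 < P 5 5 ∧ ∀ c, c ≠ 0 → c ≠ 1 → c ≠ 5 → P 5 5 < P 5 c)

theorem key2 (P : Fin 6 → Equiv.Perm (Fin 6)) (hP : Consistent₂ P) (μ : Matching) :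
    (Feasible μ ∧ Policy μ ∧ ConstrEff P μ ∧ IR P μ) ↔ μ = Xm' := by
  obtain ⟨⟨a0, b0⟩, ⟨a1, b1⟩, ⟨a2, b2⟩, ⟨a3, b3⟩, ⟨a4, b4⟩, ⟨a5, a5', b5⟩⟩ := hP
  constructor
  · rintro ⟨hF, hPol, hCE, hIR⟩
    have m0 : μ 0 = some 0 ∨ μ 0 = some 5 := by
      obtain ⟨c, hc, hle⟩ := acc (hIR 0); rw [hc]
      fin_cases c <;>
        first
          | exact .inl rfl
          | exact .inr rfl
          | exact absurd hle (not_le.2 (b0 _ (by decide) (by decide)))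
    have m1 : μ 1 = some 1 ∨ μ 1 = some 5 := by
      obtain ⟨c, hc, hle⟩ := acc (hIR 1); rw [hc]
      fin_cases c <;>
        first
          | exact .inl rfl
          | exact .inr rfl
          | exact absurd hle (not_le.2 (b1 _ (by decide) (by decide)))
    have m2 : μ 2 = some 2 ∨ μ 2 = some 4 := by
      obtain ⟨c, hc, hle⟩ := acc (hIR 2); rw [hc]
      fin_cases c <;>
        first
          | exact .inl rfl
          | exact .inr rfl
          | exact absurd hle (not_le.2 (b2 _ (by decide) (by decide)))
    have m3 : μ 3 = some 3 ∨ μ 3 = some 2 := by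
      obtain ⟨c, hc, hle⟩ := acc (hIR 3); rw [hc]
      fin_cases c <;>
        first
          | exact .inl rfl
          | exact .inr rfl
          | exact absurd hle (not_le.2 (b3 _ (by decide) (by decide)))
    have m4 : μ 4 = some 4 ∨ μ 4 = some 2 := by
      obtain ⟨c, hc, hle⟩ := acc (hIR 4); rw [hc]
      fin_cases c <;>
        first
          | exact .inl rfl
          | exact .inr rfl
          | exact absurd hle (not_le.2 (b4 _ (by decide) (by decide)))
    have m5 : μ 5 = some 5 ∨ μ 5 = some 0 ∨ μ 5 = some 1 := by
      obtain ⟨c, hc, hle⟩ := acc (hIR 5); rw [hc]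
      fin_cases c <;>
        first
          | exact .inl rfl
          | exact .inr (.inl rfl)
          | exact .inr (.inr rfl)
          | exact absurd hle (not_le.2 (b5 _ (by decide) (by decide) (by decide)))
    rcases m0 with h0 | h0 <;> rcases m1 with h1 | h1 <;>
      rcases m2 with h2 | h2 <;> rcases m3 with h3 | h3 <;>
      rcases m4 with h4 | h4 <;> rcases m5 with h5 | h5 | h5 <;>
      first
        | (funext s; fin_cases s <;>
              first | exact h0 | exact h1 | exact h2 | exact h3 | exact h4 | exact h5)
        | exact absurd (hF 0 1 _ h0 h1) (by decide)
        | exact absurd (hF 0 5 _ h0 h5) (by decide)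
        | exact absurd (hF 1 5 _ h1 h5) (by decide)
        | exact absurd (hF 2 3 _ h2 h3) (by decide)
        | exact absurd (hF 2 4 _ h2 h4) (by decide)
        | exact absurd (hF 3 4 _ h3 h4) (by decide)
        | exact (policy_pair hPol (show (0:Fin 6) ≠ 3 by decide) (by decide) (by decide) h0 h3 (by decide)).elim
        | exact (policy_pair hPol (show (1:Fin 6) ≠ 4 by decide) (by decide) (by decide) h1 h4 (by decide)).elim
        | exact absurd ⟨Xm', feasXm', polXm', dom_helperX' a1 a2 a4 a5' h0 h1 h2 h3 h4 h5⟩ hCE.2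
  · rintro rfl
    refine ⟨feasXm', polXm', ⟨polXm', ?_⟩, ?_⟩
    · rintro ⟨μ', hF', hPol', hall, s₀, hne, -⟩
      have n0 : μ' 0 = some 5 ∨ μ' 0 = some 0 := by
        obtain ⟨c, hc, hle⟩ := acc (hall 0); rw [hc]
        fin_cases c <;>
          first
            | exact .inl rfl
            | exact .inr rfl
            | exact absurd hle (not_le.2 (b0 _ (by decide) (by decide)))
      have n1 : μ' 1 = some 5 := by
        obtain ⟨c, hc, hle⟩ := acc (hall 1); rw [hc]
        fin_cases c <;>
          first
            | rfl
            | exact absurd hle (not_le.2 a1)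
            | exact absurd hle (not_le.2 (a1.trans (b1 _ (by decide) (by decide))))
      have n2 : μ' 2 = some 4 := by
        obtain ⟨c, hc, hle⟩ := acc (hall 2); rw [hc]
        fin_cases c <;>
          first
            | rfl
            | exact absurd hle (not_le.2 a2)
            | exact absurd hle (not_le.2 (a2.trans (b2 _ (by decide) (by decide))))
      have n3 : μ' 3 = some 2 ∨ μ' 3 = some 3 := by
        obtain ⟨c, hc, hle⟩ := acc (hall 3); rw [hc]
        fin_cases c <;>
          first
            | exact .inl rfl
            | exact .inr rfl
            | exact absurd hle (not_le.2 (b3 _ (by decide) (by decide)))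
      have n4 : μ' 4 = some 2 := by
        obtain ⟨c, hc, hle⟩ := acc (hall 4); rw [hc]
        fin_cases c <;>
          first
            | rfl
            | exact absurd hle (not_le.2 a4)
            | exact absurd hle (not_le.2 (a4.trans (b4 _ (by decide) (by decide))))
      have n5 : μ' 5 = some 0 ∨ μ' 5 = some 1 := by
        obtain ⟨c, hc, hle⟩ := acc (hall 5); rw [hc]
        fin_cases c <;>
          first
            | exact .inl rfl
            | exact .inr rfl
            | exact absurd hle (not_le.2 a5')
            | exact absurd hle (not_le.2 (a5'.trans (b5 _ (by decide) (by decide) (by decide))))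
      have e0 : μ' 0 = some 0 := by
        rcases n0 with h | h
        · exact absurd (hF' 0 1 5 h n1) (by decide)
        · exact h
      have e3 : μ' 3 = some 3 := by
        rcases n3 with h | h
        · exact absurd (hF' 3 4 2 h n4) (by decide)
        · exact h
      have e5 : μ' 5 = some 1 := by
        rcases n5 with h | h
        · exact absurd (hF' 0 5 0 e0 h) (by decide)
        · exact h
      fin_cases s₀ <;>
        first
          | exact hne e0
          | exact hne n1
          | exact hne n2
          | exact hne e3
          | exact hne n4
          | exact hne e5
    · intro s
      fin_cases s <;>
        first
          | exact le_refl _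
          | exact le_of_lt a1
          | exact le_of_lt a2
          | exact le_of_lt a4
          | exact le_of_lt a5'

/-- Modified consistency after student 5 misreports `c₁ ≻ c₆ ≻ ⋯`. -/
def Consistent₃ (P : Fin 6 → Equiv.Perm (Fin 6)) : Prop :=
  (P 0 5 < P 0 0 ∧ ∀ c, c ≠ 5 → c ≠ 0 → P 0 0 < P 0 c) ∧
  (P 1 5 < P 1 1 ∧ ∀ c, c ≠ 5 → c ≠ 1 → P 1 1 < P 1 c) ∧
  (P 2 4 < P 2 3 ∧ P 2 3 < P 2 2 ∧ ∀ c, c ≠ 4 → c ≠ 3 → c ≠ 2 → P 2 2 < P 2 c) ∧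
  (P 3 2 < P 3 3 ∧ ∀ c, c ≠ 2 → c ≠ 3 → P 3 3 < P 3 c) ∧
  (P 4 2 < P 4 4 ∧ ∀ c, c ≠ 2 → c ≠ 4 → P 4 4 < P 4 c) ∧
  (P 5 0 < P 5 5 ∧ ∀ c, c ≠ 0 → c ≠ 5 → P 5 5 < P 5 c)

theorem key3 (P : Fin 6 → Equiv.Perm (Fin 6)) (hP : Consistent₃ P) (μ : Matching) :
    (Feasible μ ∧ Policy μ ∧ ConstrEff P μ ∧ IR P μ) ↔ μ = Xm := by
  obtain ⟨⟨a0, b0⟩, ⟨a1, b1⟩, ⟨a2, a2', b2⟩, ⟨a3, b3⟩, ⟨a4, b4⟩, ⟨a5, b5⟩⟩ := hP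
  constructor
  · rintro ⟨hF, hPol, hCE, hIR⟩
    have m0 : μ 0 = some 0 ∨ μ 0 = some 5 := by
      obtain ⟨c, hc, hle⟩ := acc (hIR 0); rw [hc]
      fin_cases c <;>
        first
          | exact .inl rfl
          | exact .inr rfl
          | exact absurd hle (not_le.2 (b0 _ (by decide) (by decide)))
    have m1 : μ 1 = some 1 ∨ μ 1 = some 5 := by
      obtain ⟨c, hc, hle⟩ := acc (hIR 1); rw [hc]
      fin_cases c <;>
        first
          | exact .inl rfl
          | exact .inr rfl
          | exact absurd hle (not_le.2 (b1 _ (by decide) (by decide)))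
    have m2 : μ 2 = some 2 ∨ μ 2 = some 3 ∨ μ 2 = some 4 := by
      obtain ⟨c, hc, hle⟩ := acc (hIR 2); rw [hc]
      fin_cases c <;>
        first
          | exact .inl rfl
          | exact .inr (.inl rfl)
          | exact .inr (.inr rfl)
          | exact absurd hle (not_le.2 (b2 _ (by decide) (by decide) (by decide)))
    have m3 : μ 3 = some 3 ∨ μ 3 = some 2 := by
      obtain ⟨c, hc, hle⟩ := acc (hIR 3); rw [hc]
      fin_cases c <;>
        first
          | exact .inl rfl
          | exact .inr rfl
          | exact absurd hle (not_le.2 (b3 _ (by decide) (by decide)))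
    have m4 : μ 4 = some 4 ∨ μ 4 = some 2 := by
      obtain ⟨c, hc, hle⟩ := acc (hIR 4); rw [hc]
      fin_cases c <;>
        first
          | exact .inl rfl
          | exact .inr rfl
          | exact absurd hle (not_le.2 (b4 _ (by decide) (by decide)))
    have m5 : μ 5 = some 5 ∨ μ 5 = some 0 := by
      obtain ⟨c, hc, hle⟩ := acc (hIR 5); rw [hc]
      fin_cases c <;>
        first
          | exact .inl rfl
          | exact .inr rfl
          | exact absurd hle (not_le.2 (b5 _ (by decide) (by decide)))
    rcases m0 with h0 | h0 <;> rcases m1 with h1 | h1 <;>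
      rcases m2 with h2 | h2 | h2 <;> rcases m3 with h3 | h3 <;>
      rcases m4 with h4 | h4 <;> rcases m5 with h5 | h5 <;>
      first
        | (funext s; fin_cases s <;>
              first | exact h0 | exact h1 | exact h2 | exact h3 | exact h4 | exact h5)
        | exact absurd (hF 0 1 _ h0 h1) (by decide)
        | exact absurd (hF 0 5 _ h0 h5) (by decide)
        | exact absurd (hF 1 5 _ h1 h5) (by decide)
        | exact absurd (hF 2 3 _ h2 h3) (by decide)
        | exact absurd (hF 2 4 _ h2 h4) (by decide)
        | exact absurd (hF 3 4 _ h3 h4) (by decide)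
        | exact (policy_pair hPol (show (0:Fin 6) ≠ 3 by decide) (by decide) (by decide) h0 h3 (by decide)).elim
        | exact (policy_pair hPol (show (1:Fin 6) ≠ 4 by decide) (by decide) (by decide) h1 h4 (by decide)).elim
        | exact absurd ⟨Xm, feasXm, polXm, dom_helperX a0 a2' a3 a5 h0 h1 h2 h3 h4 h5⟩ hCE.2
  · rintro rfl
    refine ⟨feasXm, polXm, ⟨polXm, ?_⟩, ?_⟩
    · rintro ⟨μ', hF', hPol', hall, s₀, hne, -⟩
      have n0 : μ' 0 = some 5 := by
        obtain ⟨c, hc, hle⟩ := acc (hall 0); rw [hc]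
        fin_cases c <;>
          first
            | rfl
            | exact absurd hle (not_le.2 a0)
            | exact absurd hle (not_le.2 (a0.trans (b0 _ (by decide) (by decide))))
      have n1 : μ' 1 = some 5 ∨ μ' 1 = some 1 := by
        obtain ⟨c, hc, hle⟩ := acc (hall 1); rw [hc]
        fin_cases c <;>
          first
            | exact .inl rfl
            | exact .inr rfl
            | exact absurd hle (not_le.2 (b1 _ (by decide) (by decide)))
      have n2 : μ' 2 = some 4 ∨ μ' 2 = some 3 := by
        obtain ⟨c, hc, hle⟩ := acc (hall 2); rw [hc]
        fin_cases c <;>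
          first
            | exact .inl rfl
            | exact .inr rfl
            | exact absurd hle (not_le.2 a2')
            | exact absurd hle (not_le.2 (a2'.trans (b2 _ (by decide) (by decide) (by decide))))
      have n3 : μ' 3 = some 2 := by
        obtain ⟨c, hc, hle⟩ := acc (hall 3); rw [hc]
        fin_cases c <;>
          first
            | rfl
            | exact absurd hle (not_le.2 a3)
            | exact absurd hle (not_le.2 (a3.trans (b3 _ (by decide) (by decide))))
      have n4 : μ' 4 = some 2 ∨ μ' 4 = some 4 := by
        obtain ⟨c, hc, hle⟩ := acc (hall 4); rw [hc]
        fin_cases c <;>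
          first
            | exact .inl rfl
            | exact .inr rfl
            | exact absurd hle (not_le.2 (b4 _ (by decide) (by decide)))
      have n5 : μ' 5 = some 0 := by
        obtain ⟨c, hc, hle⟩ := acc (hall 5); rw [hc]
        fin_cases c <;>
          first
            | rfl
            | exact absurd hle (not_le.2 a5)
            | exact absurd hle (not_le.2 (a5.trans (b5 _ (by decide) (by decide))))
      have e1 : μ' 1 = some 1 := by
        rcases n1 with h | h
        · exact absurd (hF' 0 1 5 n0 h) (by decide)
        · exact h
      have e4 : μ' 4 = some 4 := by
        rcases n4 with h | h
        · exact absurd (hF' 3 4 2 n3 h) (by decide)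
        · exact h
      have e2 : μ' 2 = some 3 := by
        rcases n2 with h | h
        · exact absurd (hF' 2 4 4 h e4) (by decide)
        · exact h
      fin_cases s₀ <;>
        first
          | exact hne n0
          | exact hne e1
          | exact hne e2
          | exact hne n3
          | exact hne e4
          | exact hne n5
    · intro s
      fin_cases s <;>
        first
          | exact le_of_lt a0
          | exact le_refl _
          | exact le_of_lt a2'
          | exact le_of_lt a3
          | exact le_of_lt a5

/-- Helper for building explicit permutations. -/
def mkP (f g : Fin 6 → Fin 6) (h : ∀ x, g (f x) = x) (h' : ∀ x, f (g x) = x) :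
    Equiv.Perm (Fin 6) := ⟨f, g, h, h'⟩

/-- A concrete profile consistent with the true preferences. -/
def Pstar : Fin 6 → Equiv.Perm (Fin 6) :=
  ![mkP ![1, 2, 3, 4, 5, 0] ![5, 0, 1, 2, 3, 4] (by decide) (by decide),
    mkP ![2, 1, 3, 4, 5, 0] ![5, 1, 0, 2, 3, 4] (by decide) (by decide),
    mkP ![3, 4, 2, 1, 0, 5] ![4, 3, 2, 0, 1, 5] (by decide) (by decide),
    mkP ![2, 3, 0, 1, 4, 5] ![2, 3, 0, 1, 4, 5] (by decide) (by decide),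
    mkP ![2, 3, 0, 4, 1, 5] ![2, 4, 0, 1, 3, 5] (by decide) (by decide),
    mkP ![0, 1, 3, 4, 5, 2] ![0, 1, 5, 2, 3, 4] (by decide) (by decide)]

/-- The misreport of student 2: `c₅ ≻ c₃ ≻ ⋯`. -/
def p2' : Equiv.Perm (Fin 6) :=
  mkP ![3, 4, 1, 2, 0, 5] ![4, 2, 3, 0, 1, 5] (by decide) (by decide)

/-- The misreport of student 5: `c₁ ≻ c₆ ≻ ⋯`. -/
def p5' : Equiv.Perm (Fin 6) :=
  mkP ![0, 2, 3, 4, 5, 1] ![0, 5, 1, 2, 3, 4] (by decide) (by decide)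

lemma pstar_consistent : Consistent Pstar := by
  unfold Consistent
  refine ⟨⟨?_, ?_⟩, ⟨?_, ?_⟩, ⟨?_, ?_, ?_⟩, ⟨?_, ?_⟩, ⟨?_, ?_⟩, ⟨?_, ?_, ?_⟩⟩ <;> decide

lemma u2_0 : Function.update Pstar 2 p2' 0 = Pstar 0 := Function.update_of_ne (by decide) _ _
lemma u2_1 : Function.update Pstar 2 p2' 1 = Pstar 1 := Function.update_of_ne (by decide) _ _
lemma u2_2 : Function.update Pstar 2 p2' 2 = p2' := Function.update_self _ _ _
lemma u2_3 : Function.update Pstar 2 p2' 3 = Pstar 3 := Function.update_of_ne (by decide) _ _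
lemma u2_4 : Function.update Pstar 2 p2' 4 = Pstar 4 := Function.update_of_ne (by decide) _ _
lemma u2_5 : Function.update Pstar 2 p2' 5 = Pstar 5 := Function.update_of_ne (by decide) _ _

lemma u5_0 : Function.update Pstar 5 p5' 0 = Pstar 0 := Function.update_of_ne (by decide) _ _
lemma u5_1 : Function.update Pstar 5 p5' 1 = Pstar 1 := Function.update_of_ne (by decide) _ _
lemma u5_2 : Function.update Pstar 5 p5' 2 = Pstar 2 := Function.update_of_ne (by decide) _ _
lemma u5_3 : Function.update Pstar 5 p5' 3 = Pstar 3 := Function.update_of_ne (by decide) _ _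
lemma u5_4 : Function.update Pstar 5 p5' 4 = Pstar 4 := Function.update_of_ne (by decide) _ _
lemma u5_5 : Function.update Pstar 5 p5' 5 = p5' := Function.update_self _ _ _

lemma update2_consistent : Consistent₂ (Function.update Pstar 2 p2') := by
  unfold Consistent₂
  rw [u2_0, u2_1, u2_2, u2_3, u2_4, u2_5]
  refine ⟨⟨?_, ?_⟩, ⟨?_, ?_⟩, ⟨?_, ?_⟩, ⟨?_, ?_⟩, ⟨?_, ?_⟩, ⟨?_, ?_, ?_⟩⟩ <;> decide

lemma update5_consistent : Consistent₃ (Function.update Pstar 5 p5') := by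
  unfold Consistent₃
  rw [u5_0, u5_1, u5_2, u5_3, u5_4, u5_5]
  refine ⟨⟨?_, ?_⟩, ⟨?_, ?_⟩, ⟨?_, ?_, ?_⟩, ⟨?_, ?_⟩, ⟨?_, ?_⟩, ⟨?_, ?_⟩⟩ <;> decide

/-- Impossibility with district-level ceilings: at any profile consistent
with the stated true preferences, exactly the two matchings `X` and `X'`
satisfy feasibility, the policy goal, constrained efficiency, and individual
rationality; and no mechanism satisfies the policy goal, constrained
efficiency, individual rationality, and strategy-proofness. -/
theorem district_ceiling_impossibility :
    (∀ P : Fin 6 → Equiv.Perm (Fin 6), Consistent P →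
      {μ : Matching | Feasible μ ∧ Policy μ ∧ ConstrEff P μ ∧ IR P μ} =
        {Xm, Xm'}) ∧
    ¬ ∃ φ : (Fin 6 → Equiv.Perm (Fin 6)) → Matching,
      (∀ P, Feasible (φ P) ∧ Policy (φ P) ∧ ConstrEff P (φ P) ∧ IR P (φ P)) ∧
      -- strategy-proofness
      (∀ P s P', ¬ (wPref (P s) (φ (Function.update P s P') s) (φ P s) ∧
        φ (Function.update P s P') s ≠ φ P s)) := by
  constructor
  · intro P hP
    ext μ
    simp only [Set.mem_setOf_eq, Set.mem_insert_iff, Set.mem_singleton_iff]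
    exact keyTrue P hP μ
  · rintro ⟨φ, hgood, hSP⟩
    rcases (keyTrue Pstar pstar_consistent (φ Pstar)).1 (hgood Pstar) with hX | hX'
    · have hQ : φ (Function.update Pstar 2 p2') = Xm' :=
        (key2 _ update2_consistent _).1 (hgood _)
      refine hSP Pstar 2 p2' ⟨?_, ?_⟩
      · rw [hQ, hX]
        show (Pstar 2) 4 ≤ (Pstar 2) 3
        decide
      · rw [hQ, hX]
        decide
    · have hQ : φ (Function.update Pstar 5 p5') = Xm :=
        (key3 _ update5_consistent _).1 (hgood _)
      refine hSP Pstar 5 p5' ⟨?_, ?_⟩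
      · rw [hQ, hX']
        show (Pstar 5) 0 ≤ (Pstar 5) 1
        decide
      · rw [hQ, hX']
        decide
end
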